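/- Let Z be a metric space with its Borel σ-algebra, let ε > 0 and c ≥ 0. Let D₁ : ℝ^d → P(Z) be ε-sensitive in coupling form, and let S : ℝ^d → ℝ^d be c-Lipschitz. Let (α_k)_{k≥1} be nonnegative weights with Σ_{k≥1} α_k = 1 and define the mixture distribution map D̄(θ) := Σ_{k≥1} α_k D₁(S^{k−1}(θ)). Then D̄ is (Σ_{k≥1} α_k c^{k−1} ε)-sensitive in coupling form: for all θ, θ' ∈ ℝ^d there exists a coupling π of D̄(θ) and D̄(θ') with ∫ dist(z, z') dπ(z, z') ≤ (Σ_{k≥1} α_k c^{k−1} ε) ‖θ − θ'‖. -/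

import Mathlib

open MeasureTheory
open scoped NNReal ENNReal

/-- A coupling of two probability measures `μ` and `ν` on `Z` is a measure on `Z × Z`
whose first marginal is `μ` and whose second marginal is `ν`. -/
def IsCoupling {Z : Type*} [MeasurableSpace Z] (π : Measure (Z × Z)) (μ ν : Measure Z) : Prop :=
  π.map Prod.fst = μ ∧ π.map Prod.snd = ν

/-- **Lemma A.2 (sensitivity of the mixed population of level-`k` thinkers)**.
Here `α k` is the weight of level-`(k+1)` thinkers, for `k = 0, 1, 2, …`, so that the mixture
`D̄(θ) = ∑_{k≥1} αₖ D₁(S^{k-1}(θ))` is `Measure.sum fun k => α k • D₁ (S^[k] θ)`, and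
`∑_{k≥1} αₖ c^{k-1} ε = ∑' (k : ℕ), α k * c^k * ε`. If `D₁` is `ε`-sensitive in coupling form
and `S` is `c`-Lipschitz then `D̄` is `(∑_{k≥1} αₖ c^{k-1} ε)`-sensitive in coupling form. -/
theorem mixed_population_sensitivity
    {Z : Type*} [MetricSpace Z] [MeasurableSpace Z] [BorelSpace Z] {d : ℕ}
    (ε c : ℝ) (hε : 0 < ε) (hc : 0 ≤ c)
    (D₁ : EuclideanSpace ℝ (Fin d) → Measure Z)
    (hD₁prob : ∀ θ, IsProbabilityMeasure (D₁ θ))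
    (hD₁sens : ∀ θ θ', ∃ π : Measure (Z × Z), IsCoupling π (D₁ θ) (D₁ θ') ∧
      ∫ p, dist p.1 p.2 ∂π ≤ ε * ‖θ - θ'‖)
    (S : EuclideanSpace ℝ (Fin d) → EuclideanSpace ℝ (Fin d))
    (hS : ∀ θ θ', ‖S θ - S θ'‖ ≤ c * ‖θ - θ'‖)
    (α : ℕ → ℝ≥0) (hα : ∑' k, α k = 1)
    (hsum : Summable fun k : ℕ => (α k : ℝ) * c ^ k)
    (Dbar : EuclideanSpace ℝ (Fin d) → Measure Z)
    (hDbar : ∀ θ, Dbar θ = Measure.sum fun k => α k • D₁ (S^[k] θ)) :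
    ∀ θ θ', ∃ π : Measure (Z × Z), IsCoupling π (Dbar θ) (Dbar θ') ∧
      ∫ p, dist p.1 p.2 ∂π ≤ (∑' k : ℕ, (α k : ℝ) * c ^ k * ε) * ‖θ - θ'‖ := by
  intro θ θ'
  -- choose couplings for each level
  choose π hcpl hbd using fun k : ℕ => hD₁sens (S^[k] θ) (S^[k] θ')
  -- iterate Lipschitz bound
  have hiter : ∀ k : ℕ, ‖S^[k] θ - S^[k] θ'‖ ≤ c ^ k * ‖θ - θ'‖ := by
    intro k
    induction k with
    | zero => simp
    | succ k ih =>
      rw [Function.iterate_succ_apply', Function.iterate_succ_apply']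
      calc ‖S (S^[k] θ) - S (S^[k] θ')‖ ≤ c * ‖S^[k] θ - S^[k] θ'‖ := hS _ _
        _ ≤ c * (c ^ k * ‖θ - θ'‖) := by
            exact mul_le_mul_of_nonneg_left ih hc
        _ = c ^ (k + 1) * ‖θ - θ'‖ := by ring
  set B : ℝ := (∑' k : ℕ, (α k : ℝ) * c ^ k * ε) * ‖θ - θ'‖ with hBdef
  have hB0 : 0 ≤ B := by
    apply mul_nonneg _ (norm_nonneg _)
    exact tsum_nonneg fun k => by positivity
  refine ⟨Measure.sum fun k => α k • π k, ⟨?_, ?_⟩, ?_⟩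
  · rw [Measure.map_sum measurable_fst.aemeasurable, hDbar]
    congr 1
    funext k
    rw [Measure.map_smul, (hcpl k).1]
  · rw [Measure.map_sum measurable_snd.aemeasurable, hDbar]
    congr 1
    funext k
    rw [Measure.map_smul, (hcpl k).2]
  -- the integral bound
  set PP : Measure (Z × Z) := Measure.sum fun k => α k • π k with hPPdef
  by_cases hm : AEStronglyMeasurable (fun p : Z × Z => dist p.1 p.2) PP
  swap
  · rw [integral_undef (fun h => hm h.1)]
    exact hB0
  have hint : ∫ p, dist p.1 p.2 ∂PP
      = (∫⁻ p, ENNReal.ofReal (dist p.1 p.2) ∂PP).toReal :=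
    integral_eq_lintegral_of_nonneg_ae (ae_of_all _ fun p => dist_nonneg) hm
  rw [hint]
  set L : ℕ → ℝ≥0∞ := fun k => ∫⁻ p, ENNReal.ofReal (dist p.1 p.2) ∂(π k) with hLdef
  have hPPint : ∫⁻ p, ENNReal.ofReal (dist p.1 p.2) ∂PP = ∑' k, (α k : ℝ≥0∞) * L k := by
    rw [hPPdef, lintegral_sum_measure]
    congr 1
    funext k
    rw [ENNReal.smul_def, lintegral_smul_measure, smul_eq_mul]
  rw [hPPint]
  by_cases hT : (∑' k, (α k : ℝ≥0∞) * L k) = ∞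
  · rw [hT]; simpa using hB0
  -- each term bound
  have key : ∀ k : ℕ, (α k : ℝ≥0∞) * L k
      ≤ ENNReal.ofReal ((α k : ℝ) * c ^ k * ε * ‖θ - θ'‖) := by
    intro k
    rcases eq_or_ne (α k) 0 with h0 | h0
    · simp [h0]
    · have hterm : (α k : ℝ≥0∞) * L k ≠ ∞ :=
        ne_top_of_le_ne_top hT (ENNReal.le_tsum k)
      have hLk : L k ≠ ∞ := by
        intro h
        apply hterm
        rw [h, ENNReal.mul_top (by exact_mod_cast h0)]
      -- a.e. strong measurability w.r.t. π k
      have hac : π k ≪ PP := by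
        refine Measure.AbsolutelyContinuous.trans ?_
          ((Measure.le_sum (fun k => α k • π k) k).absolutelyContinuous)
        intro s hs
        rw [Measure.smul_apply, ENNReal.smul_def, smul_eq_mul] at hs
        rcases mul_eq_zero.1 hs with h | h
        · exact absurd h (by exact_mod_cast (ENNReal.coe_ne_zero.2 h0))
        · exact h
      have hmk : AEStronglyMeasurable (fun p : Z × Z => dist p.1 p.2) (π k) :=
        hm.mono_ac hac
      have hintk : ∫ p, dist p.1 p.2 ∂(π k) = (L k).toReal :=
        integral_eq_lintegral_of_nonneg_ae (ae_of_all _ fun p => dist_nonneg) hmk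
      have hLkle : (L k).toReal ≤ ε * (c ^ k * ‖θ - θ'‖) := by
        rw [← hintk]
        exact (hbd k).trans (mul_le_mul_of_nonneg_left (hiter k) hε.le)
      have hLk' : L k ≤ ENNReal.ofReal (ε * (c ^ k * ‖θ - θ'‖)) :=
        (ENNReal.le_ofReal_iff_toReal_le hLk (by positivity)).2 hLkle
      calc (α k : ℝ≥0∞) * L k ≤ (α k : ℝ≥0∞) * ENNReal.ofReal (ε * (c ^ k * ‖θ - θ'‖)) :=
            mul_le_mul_right hLk' _
        _ = ENNReal.ofReal ((α k : ℝ) * (ε * (c ^ k * ‖θ - θ'‖))) := by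
            rw [ENNReal.ofReal_mul (α k).coe_nonneg, ENNReal.ofReal_coe_nnreal]
        _ = ENNReal.ofReal ((α k : ℝ) * c ^ k * ε * ‖θ - θ'‖) := by
            ring_nf
  have hgsummable : Summable fun k : ℕ => (α k : ℝ) * c ^ k * ε * ‖θ - θ'‖ := by
    have := hsum.mul_right (ε * ‖θ - θ'‖)
    refine this.congr fun k => by ring
  have hsum_le : (∑' k, (α k : ℝ≥0∞) * L k)
      ≤ ENNReal.ofReal B := by
    calc (∑' k, (α k : ℝ≥0∞) * L k)
        ≤ ∑' k, ENNReal.ofReal ((α k : ℝ) * c ^ k * ε * ‖θ - θ'‖) :=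
          ENNReal.tsum_le_tsum key
      _ = ENNReal.ofReal (∑' k, (α k : ℝ) * c ^ k * ε * ‖θ - θ'‖) :=
          (ENNReal.ofReal_tsum_of_nonneg (fun k => by positivity) hgsummable).symm
      _ = ENNReal.ofReal B := by rw [hBdef, tsum_mul_right]
  exact ENNReal.toReal_le_of_le_ofReal hB0 hsum_le
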